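/- There exists a one-hidden-layer-style ReLU network configuration for which an active path region is disconnected: concretely, there exist parameters of a ReLU network with input dimension 1 and a path π such that A_π = {x ∈ ℝ : f_π(x) = 1} = [0.5, 1.5] ∪ [2.5, 3.5], which is not a connected (nor convex) subset of ℝ. -/
import Mathlib


open Matrix

/-- Real-valued indicator of `0 ≤ t`. -/
noncomputable def ind (t : ℝ) : ℝ := if 0 ≤ t then 1 else 0

lemma ind_mul_ind_eq_one (a b : ℝ) : ind a * ind b = 1 ↔ 0 ≤ a ∧ 0 ≤ b := by
  constructor
  · intro h
    by_cases ha : 0 ≤ a <;> by_cases hb : 0 ≤ b <;> simp [ind, ha, hb] at h ⊢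
  · rintro ⟨ha, hb⟩; simp [ind, ha, hb]

/-- There is a 2-hidden-layer ReLU network (with biases) on a 1-dimensional input and a
path through it whose active region is `[0.5, 1.5] ∪ [2.5, 3.5]`; this set is neither
convex nor connected. -/
theorem relu_active_path_region_can_be_disconnected :
    (∃ (m : ℕ) (W1 : Matrix (Fin m) (Fin 1) ℝ) (b1 : Fin m → ℝ)
        (W2 : Matrix (Fin m) (Fin m) ℝ) (b2 : Fin m → ℝ) (i1 i2 : Fin m),
      {x : ℝ |
          ind ((W1.mulVec fun _ => x) i1 + b1 i1) *
            ind ((W2.mulVec fun j => max ((W1.mulVec fun _ => x) j + b1 j) 0) i2 + b2 i2)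
          = 1}
        = Set.Icc (0.5 : ℝ) 1.5 ∪ Set.Icc 2.5 3.5) ∧
      ¬ Convex ℝ (Set.Icc (0.5 : ℝ) 1.5 ∪ Set.Icc 2.5 3.5) ∧
      ¬ IsConnected (Set.Icc (0.5 : ℝ) 1.5 ∪ Set.Icc 2.5 3.5) := by
  refine ⟨?_, ?_, ?_⟩
  · refine ⟨4, (fun _ _ => (1:ℝ)), ![0,-1,-2,-3],
      (fun _ j => ![(1:ℝ),-2,2,-2] j), (fun _ => -0.5), 0, 0, ?_⟩
    ext x
    simp only [Set.mem_setOf_eq, ind_mul_ind_eq_one, Set.mem_union, Set.mem_Icc,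
      Matrix.mulVec, dotProduct, Fin.sum_univ_four, Fin.sum_univ_one,
      Matrix.cons_val_zero, Matrix.cons_val_one, Matrix.head_cons,
      Matrix.cons_val_two, Matrix.tail_cons, Matrix.cons_val_three, one_mul]
    rcases le_total x 1 with h1 | h1
    · rw [max_eq_right (by linarith : x + -1 ≤ 0), max_eq_right (by linarith : x + -2 ≤ 0),
        max_eq_right (by linarith : x + -3 ≤ 0)]
      rcases le_total (x + 0) 0 with hx | hx
      · rw [max_eq_right hx]
        constructor
        · rintro ⟨ha, hb⟩; exfalso; linarith
        · rintro (⟨a, b⟩ | ⟨a, b⟩) <;> (exfalso; linarith)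
      · rw [max_eq_left hx]
        constructor
        · rintro ⟨ha, hb⟩; left; constructor <;> linarith
        · rintro (⟨a, b⟩ | ⟨a, b⟩) <;> constructor <;> linarith
    · rw [max_eq_left (by linarith : (0:ℝ) ≤ x + 0),
        max_eq_left (by linarith : (0:ℝ) ≤ x + -1)]
      rcases le_total x 2 with h2 | h2
      · rw [max_eq_right (by linarith : x + -2 ≤ 0), max_eq_right (by linarith : x + -3 ≤ 0)]
        constructor
        · rintro ⟨ha, hb⟩; left; constructor <;> linarith
        · rintro (⟨a, b⟩ | ⟨a, b⟩) <;> constructor <;> linarith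
      · rw [max_eq_left (by linarith : (0:ℝ) ≤ x + -2)]
        rcases le_total x 3 with h3 | h3
        · rw [max_eq_right (by linarith : x + -3 ≤ 0)]
          constructor
          · rintro ⟨ha, hb⟩; right; constructor <;> linarith
          · rintro (⟨a, b⟩ | ⟨a, b⟩) <;> constructor <;> linarith
        · rw [max_eq_left (by linarith : (0:ℝ) ≤ x + -3)]
          constructor
          · rintro ⟨ha, hb⟩; right; constructor <;> linarith
          · rintro (⟨a, b⟩ | ⟨a, b⟩) <;> constructor <;> linarith
  · intro h
    have h1 : (1.5:ℝ) ∈ Set.Icc (0.5 : ℝ) 1.5 ∪ Set.Icc 2.5 3.5 := by norm_num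
    have h2 : (2.5:ℝ) ∈ Set.Icc (0.5 : ℝ) 1.5 ∪ Set.Icc 2.5 3.5 := by norm_num
    have := h h1 h2 (by norm_num : (0:ℝ) ≤ 1/2) (by norm_num : (0:ℝ) ≤ 1/2) (by norm_num)
    simp only [smul_eq_mul, Set.mem_union, Set.mem_Icc] at this
    norm_num at this
  · intro h
    have hoc := h.isPreconnected.ordConnected
    have h1 : (1.5:ℝ) ∈ Set.Icc (0.5 : ℝ) 1.5 ∪ Set.Icc 2.5 3.5 := by norm_num
    have h2 : (3.5:ℝ) ∈ Set.Icc (0.5 : ℝ) 1.5 ∪ Set.Icc 2.5 3.5 := by norm_num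
    have := hoc.out h1 h2 (show (2:ℝ) ∈ Set.Icc (1.5:ℝ) 3.5 by norm_num)
    simp only [Set.mem_union, Set.mem_Icc] at this
    norm_num at this
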